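/- Let K be an uncountable Polish space. Then there exists f in the uniform closure of DBSC(K) in B(K) such that for every g ∈ DBSC(K) the set {x : f(x) ≠ g(x)} is uncountable. In particular, DBSC(K) is not closed in (B(K), ||·||_∞) in a strong sense: no function in DBSC(K) agrees with f off a countable set. -/

import Mathlib

/-- f is a bounded real function (member of B(K)). -/
def Bdd {K : Type*} (f : K → ℝ) : Prop := ∃ C : ℝ, ∀ x, |f x| ≤ C

/-- g is a difference of bounded semicontinuous functions. -/
def DBSC {K : Type*} [TopologicalSpace K] (g : K → ℝ) : Prop :=
  ∃ h k : K → ℝ, Bdd h ∧ Bdd k ∧ LowerSemicontinuous h ∧ LowerSemicontinuous k ∧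
    g = h - k

open Filter Set Function

namespace Stmt13Aux
open scoped Classical

open Cardinal in
lemma unc : Uncountable (ℕ → Bool) := by
  rw [← not_countable_iff]
  intro h
  have h1 : #(ℕ → Bool) ≤ ℵ₀ := Cardinal.mk_le_aleph0_iff.2 h
  have h2 : #(ℕ → Bool) = 2 ^ ℵ₀ := by
    rw [Cardinal.mk_arrow, Cardinal.mk_bool, Cardinal.mk_nat]; simp
  rw [h2] at h1
  exact absurd h1 (not_le.2 (Cardinal.cantor ℵ₀))



abbrev Y := ℕ × ℕ → Bool

/-- number of columns gadget size -/
def M (n : ℕ) : ℕ := 4 ^ n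

/-- "at most i ones in column n" -/
def S (n i : ℕ) : Set Y := {y | ∀ s : Finset ℕ, (∀ j ∈ s, y (n, j) = true) → s.card ≤ i}

lemma isClosed_S (n i : ℕ) : IsClosed (S n i) := by
  have : S n i = ⋂ s ∈ {s : Finset ℕ | i + 1 ≤ s.card}, {y : Y | ∃ j ∈ s, y (n, j) = false} := by
    ext y
    simp only [S, mem_setOf_eq, mem_iInter]
    constructor
    · intro hy s hs
      by_contra hc
      push_neg at hc
      have := hy s (fun j hj => by
        have := hc j hj
        cases h : y (n, j) with
        | false => exact absurd h this
        | true => rfl)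
      omega
    · intro hy s hs
      by_contra hc
      push_neg at hc
      obtain ⟨j, hj, hjf⟩ := hy s (by omega)
      rw [hs j hj] at hjf
      exact Bool.noConfusion hjf
  rw [this]
  apply isClosed_biInter
  intro s hs
  have : {y : Y | ∃ j ∈ s, y (n, j) = false} = ⋃ j ∈ s, (fun y : Y => y (n, j)) ⁻¹' {false} := by
    ext y; simp
  rw [this]
  apply isClosed_biUnion_finset
  intro j hj
  exact (IsClopen.preimage (isClopen_discrete {false}) (continuous_apply (n, j))).isClosed

lemma mem_S_iff {y : Y} {n i : ℕ} {F : Finset ℕ} (hy : ∀ j, y (n, j) = true ↔ j ∈ F) :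
    y ∈ S n i ↔ F.card ≤ i := by
  constructor
  · intro h
    exact h F (fun j hj => (hy j).2 hj)
  · intro h s hs
    exact le_trans (Finset.card_le_card (fun j hj => (hy j).1 (hs j hj))) h

lemma not_mem_S_of_infinite {y : Y} {n : ℕ} (h : {j : ℕ | y (n, j) = true}.Infinite) (i : ℕ) :
    y ∉ S n i := by
  intro hmem
  obtain ⟨t, ht, htc⟩ := h.exists_subset_card_eq (i + 1)
  have := hmem t (fun j hj => ht hj)
  omega

noncomputable def ind (s : Set Y) (y : Y) : ℝ := if y ∈ s then 1 else 0

noncomputable def φ (n : ℕ) (y : Y) : ℝ :=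
  ∑ i ∈ Finset.range (M n), (ind (S n (2 * i + 1)) y - ind (S n (2 * i)) y)

lemma ind_val {y : Y} {n i : ℕ} {F : Finset ℕ} (hy : ∀ j, y (n, j) = true ↔ j ∈ F) :
    ind (S n i) y = if F.card ≤ i then 1 else 0 := by
  unfold ind
  by_cases h : F.card ≤ i
  · rw [if_pos ((mem_S_iff hy).2 h), if_pos h]
  · rw [if_neg (fun hc => h ((mem_S_iff hy).1 hc)), if_neg h]

lemma phi_val {n : ℕ} {y : Y} {F : Finset ℕ} (hy : ∀ j, y (n, j) = true ↔ j ∈ F) :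
    φ n y = if Odd F.card ∧ F.card < 2 * M n then 1 else 0 := by
  unfold φ
  have hterm : ∀ i, ind (S n (2 * i + 1)) y - ind (S n (2 * i)) y
      = if F.card = 2 * i + 1 then (1:ℝ) else 0 := by
    intro i
    rw [ind_val hy, ind_val hy]
    split_ifs <;> first | (exfalso; omega) | norm_num
  simp_rw [hterm]
  by_cases h : Odd F.card ∧ F.card < 2 * M n
  · obtain ⟨⟨t, ht⟩, hlt⟩ := h
    rw [if_pos ⟨⟨t, ht⟩, hlt⟩]
    rw [Finset.sum_eq_single_of_mem t (Finset.mem_range.2 (by omega))]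
    · rw [if_pos (by omega)]
    · intro b _ hb
      rw [if_neg (by omega)]
  · rw [if_neg h]
    apply Finset.sum_eq_zero
    intro i hi
    rw [Finset.mem_range] at hi
    rw [if_neg]
    intro hc
    exact h ⟨⟨i, by omega⟩, by omega⟩

lemma phi01 (n : ℕ) (y : Y) : φ n y = 0 ∨ φ n y = 1 := by
  by_cases hfin : {j : ℕ | y (n, j) = true}.Finite
  · have hy : ∀ j, y (n, j) = true ↔ j ∈ hfin.toFinset := by
      intro j; rw [Set.Finite.mem_toFinset]; rfl
    rw [phi_val hy]
    split_ifs <;> simp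
  · left
    apply Finset.sum_eq_zero
    intro i _
    unfold ind
    rw [if_neg (not_mem_S_of_infinite hfin _), if_neg (not_mem_S_of_infinite hfin _)]
    ring

lemma phi_nonneg (n : ℕ) (y : Y) : 0 ≤ φ n y := by
  rcases phi01 n y with h | h <;> rw [h] <;> norm_num

lemma phi_le_one (n : ℕ) (y : Y) : φ n y ≤ 1 := by
  rcases phi01 n y with h | h <;> rw [h] <;> norm_num

lemma phi_col {n : ℕ} {y y' : Y} (h : ∀ j, y (n, j) = y' (n, j)) : φ n y = φ n y' := by
  have hS : ∀ i, (y ∈ S n i ↔ y' ∈ S n i) := by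
    intro i
    unfold S
    simp only [mem_setOf_eq]
    constructor <;> intro hy s hs
    · exact hy s (fun j hj => (h j) ▸ hs j hj)
    · exact hy s (fun j hj => (h j).symm ▸ hs j hj)
  unfold φ ind
  apply Finset.sum_congr rfl
  intro i _
  rw [if_congr (hS (2*i+1)) rfl rfl, if_congr (hS (2*i)) rfl rfl]


noncomputable def Φ (y : Y) : ℝ := ∑' n, (1/2:ℝ)^n * φ n y

lemma summable_phi (y : Y) : Summable (fun n => (1/2:ℝ)^n * φ n y) :=
  Summable.of_nonneg_of_le (fun n => mul_nonneg (by positivity) (phi_nonneg n y))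
    (fun n => mul_le_of_le_one_right (by positivity) (phi_le_one n y)) summable_geometric_two

lemma Phi_nonneg (y : Y) : 0 ≤ Φ y :=
  tsum_nonneg (fun n => mul_nonneg (by positivity) (phi_nonneg n y))

lemma Phi_le_two (y : Y) : Φ y ≤ 2 := by
  have h1 : Φ y ≤ ∑' n : ℕ, (1/2:ℝ)^n :=
    Summable.tsum_le_tsum (fun n => mul_le_of_le_one_right (by positivity) (phi_le_one n y))
      (summable_phi y) summable_geometric_two
  rwa [tsum_geometric_two] at h1

noncomputable def pt (n : ℕ) (b : ℕ → Bool) (F : Finset ℕ) : Y :=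
  fun q => if q.1 = n then decide (q.2 ∈ F) else b q.2

lemma pt_col (n : ℕ) (b : ℕ → Bool) (F : Finset ℕ) :
    ∀ j, pt n b F (n, j) = true ↔ j ∈ F := by
  intro j; simp [pt]

lemma phi_pt_ne {p n : ℕ} (hp : p ≠ n) (b : ℕ → Bool) (F F' : Finset ℕ) :
    φ p (pt n b F') = φ p (pt n b F) :=
  phi_col (fun j => by simp [pt, hp])

noncomputable def vv (n : ℕ) (F : Finset ℕ) : ℝ :=
  if Odd F.card ∧ F.card < 2 * M n then 1 else 0

lemma Phi_pt_diff (n : ℕ) (b : ℕ → Bool) (F F' : Finset ℕ) :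
    Φ (pt n b F') - Φ (pt n b F) = (1/2:ℝ)^n * (vv n F' - vv n F) := by
  unfold Φ
  rw [← Summable.tsum_sub (summable_phi _) (summable_phi _)]
  rw [tsum_eq_single n ?_]
  · rw [phi_val (pt_col n b F'), phi_val (pt_col n b F)]
    unfold vv; ring
  · intro p hp
    rw [phi_pt_ne hp b F F']
    ring

lemma tendsto_pt (n : ℕ) (b : ℕ → Bool) (F : Finset ℕ) :
    Tendsto (fun m => pt n b (insert m F)) atTop (nhds (pt n b F)) := by
  rw [tendsto_pi_nhds]
  intro q
  apply tendsto_atTop_of_eventually_const (i₀ := q.2 + 1)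
  intro m hm
  obtain ⟨p, j⟩ := q
  by_cases hq : p = n
  · simp only [pt, hq, if_pos rfl]
    have : (j ∈ insert m F) ↔ (j ∈ F) := by
      rw [Finset.mem_insert]
      constructor
      · rintro (rfl | h)
        · omega
        · exact h
      · exact Or.inr
    exact decide_eq_decide.2 this
  · simp [pt, hq]


lemma main {K : Type*} [TopologicalSpace K] [T2Space K]
    (e : Y → K) (he : Continuous e) (hinj : Function.Injective e) :
    ∃ f : K → ℝ, Bdd f ∧
      (∀ ε : ℝ, 0 < ε → ∃ g : K → ℝ, DBSC g ∧ ∀ x, |f x - g x| ≤ ε) ∧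
      (∀ g : K → ℝ, DBSC g → ¬ {x | f x ≠ g x}.Countable) := by
  have hclosed : ∀ n i, IsClosed (e '' S n i) :=
    fun n i => (((isClosed_S n i).isCompact).image he).isClosed
  have hmem_img : ∀ (y : Y) (n i : ℕ), (e y ∈ e '' S n i) ↔ y ∈ S n i :=
    fun y n i => hinj.mem_set_image
  set f : K → ℝ := Function.extend e Φ (fun _ => 0) with hf
  have hfe : ∀ y, f (e y) = Φ y := fun y => hinj.extend_apply _ _ _
  have hfo : ∀ x, x ∉ range e → f x = 0 := by
    intro x hx
    exact Function.extend_apply' _ _ _ (fun h => hx (Set.mem_range.2 h))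
  refine ⟨f, ⟨2, ?_⟩, ?_, ?_⟩
  · -- bounded
    intro x
    by_cases hx : x ∈ range e
    · obtain ⟨y, rfl⟩ := hx
      rw [hfe, abs_le]
      exact ⟨by linarith [Phi_nonneg y], Phi_le_two y⟩
    · rw [hfo x hx]; norm_num
  · -- approximation
    intro ε hε
    obtain ⟨m, hm⟩ := exists_pow_lt_of_lt_one (show (0:ℝ) < ε/2 by positivity)
      (show (1/2:ℝ) < 1 by norm_num)
    set g : K → ℝ := Function.extend e
      (fun y => ∑ n ∈ Finset.range m, (1/2:ℝ)^n * φ n y) (fun _ => 0) with hg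
    set h : K → ℝ := fun x => ∑ n ∈ Finset.range m, ∑ i ∈ Finset.range (M n),
      Set.indicator (e '' S n (2*i)) (fun _ => -((1/2:ℝ)^n)) x with hh
    set k : K → ℝ := fun x => ∑ n ∈ Finset.range m, ∑ i ∈ Finset.range (M n),
      Set.indicator (e '' S n (2*i+1)) (fun _ => -((1/2:ℝ)^n)) x with hk
    have hbound : ∀ (x : K), |h x| ≤ ∑ n ∈ Finset.range m, ∑ i ∈ Finset.range (M n), (1/2:ℝ)^n
        := by
      intro x
      refine le_trans (Finset.abs_sum_le_sum_abs _ _) (Finset.sum_le_sum fun n _ => ?_)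
      refine le_trans (Finset.abs_sum_le_sum_abs _ _) (Finset.sum_le_sum fun i _ => ?_)
      rw [Set.indicator_apply]
      split_ifs <;> simp [abs_of_nonpos] <;> positivity
    have hbound' : ∀ (x : K), |k x| ≤ ∑ n ∈ Finset.range m, ∑ i ∈ Finset.range (M n), (1/2:ℝ)^n
        := by
      intro x
      refine le_trans (Finset.abs_sum_le_sum_abs _ _) (Finset.sum_le_sum fun n _ => ?_)
      refine le_trans (Finset.abs_sum_le_sum_abs _ _) (Finset.sum_le_sum fun i _ => ?_)
      rw [Set.indicator_apply]
      split_ifs <;> simp [abs_of_nonpos] <;> positivity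
    have hlsc : LowerSemicontinuous h := by
      apply lowerSemicontinuous_sum
      intro n _
      apply lowerSemicontinuous_sum
      intro i _
      exact (hclosed n (2*i)).lowerSemicontinuous_indicator (neg_nonpos.2 (by positivity))
    have hlsc' : LowerSemicontinuous k := by
      apply lowerSemicontinuous_sum
      intro n _
      apply lowerSemicontinuous_sum
      intro i _
      exact (hclosed n (2*i+1)).lowerSemicontinuous_indicator (neg_nonpos.2 (by positivity))
    refine ⟨g, ⟨h, k, ⟨_, hbound⟩, ⟨_, hbound'⟩, hlsc, hlsc', ?_⟩, ?_⟩
    · -- g = h - k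
      funext x
      simp only [Pi.sub_apply]
      by_cases hx : x ∈ range e
      · obtain ⟨y, rfl⟩ := hx
        have hge : g (e y) = ∑ n ∈ Finset.range m, (1/2:ℝ)^n * φ n y :=
          hinj.extend_apply _ _ _
        rw [hge, hh, hk]
        rw [← Finset.sum_sub_distrib]
        apply Finset.sum_congr rfl
        intro n _
        rw [← Finset.sum_sub_distrib]
        unfold φ
        rw [Finset.mul_sum]
        apply Finset.sum_congr rfl
        intro i _
        rw [Set.indicator_apply, Set.indicator_apply]
        simp only [hmem_img]
        unfold ind
        split_ifs <;> ring
      · have hgx : g x = 0 :=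
          Function.extend_apply' _ _ _ (fun hc => hx (Set.mem_range.2 hc))
        have hzero : ∀ j, ∀ c : ℝ, ∀ n, Set.indicator (e '' S n j) (fun _ => c) x = 0 := by
          intro j c n
          apply Set.indicator_of_notMem
          intro hc
          exact hx (Set.image_subset_range e _ hc)
        have h1 : h x = 0 := Finset.sum_eq_zero (fun n _ => Finset.sum_eq_zero (fun i _ => hzero _ _ _))
        have h2 : k x = 0 := Finset.sum_eq_zero (fun n _ => Finset.sum_eq_zero (fun i _ => hzero _ _ _))
        rw [hgx, h1, h2]
        norm_num
    · -- approx bound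
      intro x
      by_cases hx : x ∈ range e
      · obtain ⟨y, rfl⟩ := hx
        have hge : g (e y) = ∑ n ∈ Finset.range m, (1/2:ℝ)^n * φ n y :=
          hinj.extend_apply _ _ _
        rw [hfe, hge]
        have hsum := Summable.sum_add_tsum_nat_add m (summable_phi y)
        have htail : Summable (fun i => (1/2:ℝ)^(i+m) * φ (i+m) y) :=
          ((summable_phi y).comp_injective (add_left_injective m))
        have h1 : Φ y - ∑ n ∈ Finset.range m, (1/2:ℝ)^n * φ n y
            = ∑' i, (1/2:ℝ)^(i+m) * φ (i+m) y := by
          rw [Φ, ← hsum]; ring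
        rw [h1]
        have h2 : |∑' i, (1/2:ℝ)^(i+m) * φ (i+m) y| ≤ ∑' i : ℕ, (1/2:ℝ)^(i+m) := by
          rw [abs_of_nonneg (tsum_nonneg (fun i => mul_nonneg (by positivity) (phi_nonneg _ y)))]
          refine Summable.tsum_le_tsum (fun i => mul_le_of_le_one_right (by positivity) (phi_le_one _ y))
            htail ?_
          have : (fun i : ℕ => (1/2:ℝ)^(i+m)) = (fun i : ℕ => (1/2:ℝ)^i * (1/2:ℝ)^m) := by
            funext i; rw [pow_add]
          rw [this]
          exact summable_geometric_two.mul_right _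
        have h3 : ∑' i : ℕ, (1/2:ℝ)^(i+m) = 2 * (1/2:ℝ)^m := by
          have : (fun i : ℕ => (1/2:ℝ)^(i+m)) = (fun i : ℕ => (1/2:ℝ)^i * (1/2:ℝ)^m) := by
            funext i; rw [pow_add]
          rw [this, tsum_mul_right, tsum_geometric_two]
        rw [h3] at h2
        linarith
      · have hgx : g x = 0 :=
          Function.extend_apply' _ _ _ (fun hc => hx (Set.mem_range.2 hc))
        rw [hfo x hx, hgx]
        simpa using hε.le
  · -- main part
    intro g hg hcount
    haveI := unc
    obtain ⟨h, k, ⟨Ch, hCh⟩, ⟨Ck, hCk⟩, hlsc, klsc, hgeq⟩ := hg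
    set C : ℝ := max Ch Ck with hC
    have hhC : ∀ z, |h z| ≤ C := fun z => le_trans (hCh z) (le_max_left _ _)
    have hkC : ∀ z, |k z| ≤ C := fun z => le_trans (hCk z) (le_max_right _ _)
    have hCnn : 0 ≤ C := le_trans (abs_nonneg _) (hhC (e (pt 0 (fun _ => false) ∅)))
    obtain ⟨n, hn⟩ := pow_unbounded_of_one_lt (R := ℝ) (32*C) (by norm_num : (1:ℝ) < 2)
    set δ : ℝ := (1/2:ℝ)^n with hδ
    have hδpos : 0 < δ := by positivity
    have hbex : ∃ b : ℕ → Bool, ∀ F : Finset ℕ, f (e (pt n b F)) = g (e (pt n b F)) := by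
      by_contra hc
      push_neg at hc
      choose Fb hFb using hc
      have hinj2 : Function.Injective (fun b : ℕ → Bool => e (pt n b (Fb b))) := by
        intro b b' hbb
        have h1 := hinj hbb
        funext j
        have h2 := congrFun h1 (n+1, j)
        simpa [pt] using h2
      have hsub : range (fun b : ℕ → Bool => e (pt n b (Fb b))) ⊆ {z | f z ≠ g z} := by
        rintro z ⟨b, rfl⟩
        exact hFb b
      have hcnt : (range (fun b : ℕ → Bool => e (pt n b (Fb b)))).Countable :=
        hcount.mono hsub
      have huniv : (univ : Set (ℕ → Bool)).Countable := by
        have h3 := hcnt.preimage hinj2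
        rwa [Set.preimage_range] at h3
      exact absurd (Set.countable_univ_iff.mp huniv) not_countable
    obtain ⟨b, hb⟩ := hbex
    set x : Finset ℕ → K := fun F => e (pt n b F) with hx
    have hgdiff : ∀ F F' : Finset ℕ, g (x F') - g (x F) = δ * (vv n F' - vv n F) := by
      intro F F'
      rw [hx]
      simp only
      rw [← hb F, ← hb F', hfe, hfe]
      exact Phi_pt_diff n b F F'
    set s : K → ℝ := fun z => h z + k z with hs
    have hstep : ∀ F : Finset ℕ, F.card + 1 < 2 * M n →
        ∃ m, m ∉ F ∧ s (x (insert m F)) ≥ s (x F) + δ/2 := by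
      intro F hF
      have ht : Tendsto (fun m => x (insert m F)) atTop (nhds (x F)) :=
        (he.tendsto (pt n b F)).comp (tendsto_pt n b F)
      have ev1 : ∀ᶠ m in atTop, m ∉ F := by
        rw [← Nat.cofinite_eq_atTop]
        exact F.eventually_cofinite_notMem
      have ev2 : ∀ᶠ m in atTop, h (x F) - δ/8 < h (x (insert m F)) :=
        ht.eventually (hlsc (x F) _ (by linarith))
      have ev3 : ∀ᶠ m in atTop, k (x F) - δ/8 < k (x (insert m F)) :=
        ht.eventually (klsc (x F) _ (by linarith))
      obtain ⟨m, hm1, hm2, hm3⟩ := (ev1.and (ev2.and ev3)).exists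
      refine ⟨m, hm1, ?_⟩
      have hcard : (insert m F).card = F.card + 1 := Finset.card_insert_of_notMem hm1
      have hjump := hgdiff F (insert m F)
      have hvv : vv n (insert m F) - vv n F = 1 ∨ vv n (insert m F) - vv n F = -1 := by
        unfold vv
        rw [hcard]
        rcases Nat.even_or_odd F.card with hpar | hpar
        · left
          rw [if_pos ⟨Nat.odd_add_one.mpr (Nat.not_odd_iff_even.mpr hpar), by omega⟩,
            if_neg (fun hcon => (Nat.not_odd_iff_even.mpr hpar) hcon.1)]
          norm_num
        · right
          rw [if_neg, if_pos ⟨hpar, by omega⟩]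
          · norm_num
          · rintro ⟨ho, -⟩
            exact (Nat.odd_add_one.mp ho) hpar
      have hg1 : g (x (insert m F)) = h (x (insert m F)) - k (x (insert m F)) := by
        rw [hgeq]; rfl
      have hg2 : g (x F) = h (x F) - k (x F) := by rw [hgeq]; rfl
      rw [hg1, hg2] at hjump
      rcases hvv with hv | hv
      · rw [hv, mul_one] at hjump
        simp only [hs]
        linarith
      · rw [hv] at hjump
        simp only [hs]
        linarith
    have hrec : ∀ j, j < 2 * M n →
        ∃ F : Finset ℕ, F.card = j ∧ s (x F) ≥ s (x ∅) + j * (δ/2) := by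
      intro j
      induction j with
      | zero => exact fun _ => ⟨∅, by simp, by simp⟩
      | succ j ih =>
        intro hj
        obtain ⟨F, hFc, hFs⟩ := ih (by omega)
        obtain ⟨m, hm, hms⟩ := hstep F (by omega)
        refine ⟨insert m F, by rw [Finset.card_insert_of_notMem hm, hFc], ?_⟩
        have hcast : ((j+1 : ℕ) : ℝ) * (δ/2) = (j : ℝ) * (δ/2) + δ/2 := by push_cast; ring
        rw [Nat.cast_add, Nat.cast_one]
        linarith
    have hM1 : 1 ≤ M n := Nat.one_le_pow _ _ (by norm_num)
    obtain ⟨F, hFc, hFs⟩ := hrec (2 * M n - 1) (by omega)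
    have hsub1 : s (x F) ≤ 2*C := by
      have := hhC (x F); have := hkC (x F)
      simp only [hs]
      have h1 := abs_le.mp (hhC (x F))
      have h2 := abs_le.mp (hkC (x F))
      linarith
    have hsub2 : -(2*C) ≤ s (x ∅) := by
      simp only [hs]
      have h1 := abs_le.mp (hhC (x ∅))
      have h2 := abs_le.mp (hkC (x ∅))
      linarith
    have hMn : ((M n : ℕ) : ℝ) = (4:ℝ)^n := by
      unfold M; push_cast; ring
    have h4one : (1:ℝ) ≤ (4:ℝ)^n := one_le_pow₀ (by norm_num)
    have hcast : ((2 * M n - 1 : ℕ) : ℝ) ≥ (4:ℝ)^n := by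
      rw [Nat.cast_sub (by omega)]
      push_cast
      rw [hMn]
      linarith
    have hkey : (4:ℝ)^n * (δ/2) = (2:ℝ)^n / 2 := by
      have h45 : (4:ℝ)^n * (1/2:ℝ)^n = (2:ℝ)^n := by
        rw [← mul_pow]; norm_num
      rw [hδ, ← mul_div_assoc, h45]
    have hge : ((2 * M n - 1 : ℕ) : ℝ) * (δ/2) ≥ (2:ℝ)^n / 2 := by
      rw [← hkey]
      exact mul_le_mul_of_nonneg_right hcast (by positivity)
    clear_value x s δ C
    have e1 : s (x F) - s (x ∅) ≤ 4*C := by linarith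
    have hFs' : s (x F) ≥ s (x ∅) + ((2 * M n - 1 : ℕ) : ℝ) * (δ/2) := hFs
    have e2 : ((2 * M n - 1 : ℕ) : ℝ) * (δ/2) ≤ 4*C := by linarith [hFs', e1]
    have e3 : (2:ℝ)^n/2 ≤ 4*C := le_trans hge e2
    linarith

end Stmt13Aux

/-- Let K be an uncountable Polish space. Then there exists f in the
uniform closure of DBSC(K) in B(K) such that for every g ∈ DBSC(K) the set [f ≠ g] is
uncountable; in particular no function in DBSC(K) agrees with f off a countable set. -/
theorem stmt13 {K : Type*} [TopologicalSpace K] [PolishSpace K] [Uncountable K] :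
    ∃ f : K → ℝ, Bdd f ∧
      (∀ ε : ℝ, 0 < ε → ∃ g : K → ℝ, DBSC g ∧ ∀ x, |f x - g x| ≤ ε) ∧
      (∀ g : K → ℝ, DBSC g → ¬ {x | f x ≠ g x}.Countable) := by
  have huncount : ¬ (Set.univ : Set K).Countable := by
    rw [Set.countable_univ_iff]
    exact not_countable
  obtain ⟨E, -, hEc, hEinj⟩ := isClosed_univ.exists_nat_bool_injection_of_not_countable huncount
  let H : Stmt13Aux.Y ≃ₜ (ℕ → Bool) :=
    Homeomorph.piCongrLeft (Y := fun _ => Bool) (Denumerable.eqv (ℕ × ℕ))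
  exact Stmt13Aux.main (E ∘ H) (hEc.comp H.continuous) (hEinj.comp H.injective)
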